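/- For every n ≥ 1, the support of the polynomial q_n(z) = 2^{n+1}(n+2) z^{2n+2} + Σ_{s=2}^{n} 2^{n+1}(C(n,s)+C(n,s-1)) z^{2n-2s+4} + 2^{n+1} z^{2} equals {2} ∪ {2k : 2 ≤ k ≤ n+1}, which contains no odd numbers; in particular q_n is not interpolating since 2 and 4 are in the support but 3 is not. -/

import Mathlib

open Polynomial

noncomputable def qn (n : ℕ) : Polynomial ℕ :=
  C (2 ^ (n + 1) * (n + 2)) * X ^ (2 * n + 2) +
    ∑ s ∈ Finset.Icc 2 n,
      C (2 ^ (n + 1) * (n.choose s + n.choose (s - 1))) * X ^ (2 * n - 2 * s + 4) +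
    C (2 ^ (n + 1)) * X ^ 2

lemma qn_coeff (n m : ℕ) :
    (qn n).coeff m =
      (if m = 2 * n + 2 then 2 ^ (n + 1) * (n + 2) else 0) +
      (∑ s ∈ Finset.Icc 2 n,
        if m = 2 * n - 2 * s + 4 then 2 ^ (n + 1) * (n.choose s + n.choose (s - 1)) else 0) +
      (if m = 2 then 2 ^ (n + 1) else 0) := by
  simp only [qn, coeff_add, finset_sum_coeff, coeff_C_mul, coeff_X_pow, mul_ite, mul_one,
    mul_zero]

lemma qn_support (n : ℕ) (hn : 1 ≤ n) :
    (qn n).support = insert 2 ((Finset.Icc 2 (n + 1)).image (fun k => 2 * k)) := by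
  ext m
  rw [mem_support_iff, qn_coeff]
  constructor
  · intro h
    have h3 : (if m = 2 * n + 2 then 2 ^ (n + 1) * (n + 2) else 0) ≠ 0 ∨
        (∑ s ∈ Finset.Icc 2 n,
          if m = 2 * n - 2 * s + 4 then 2 ^ (n + 1) * (n.choose s + n.choose (s - 1)) else 0) ≠ 0 ∨
        (if m = 2 then 2 ^ (n + 1) else 0) ≠ 0 := by
      by_contra hc
      push_neg at hc
      omega
    simp only [Finset.mem_insert, Finset.mem_image, Finset.mem_Icc]
    rcases h3 with h1 | h2 | h3
    · split_ifs at h1 with he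
      · exact Or.inr ⟨n + 1, by omega, by omega⟩
      · exact absurd rfl h1
    · obtain ⟨s, hs, hne⟩ := Finset.exists_ne_zero_of_sum_ne_zero h2
      rw [Finset.mem_Icc] at hs
      split_ifs at hne with he
      · exact Or.inr ⟨n - s + 2, by omega, by omega⟩
      · exact absurd rfl hne
    · split_ifs at h3 with he
      · exact Or.inl he
      · exact absurd rfl h3
  · intro h
    simp only [Finset.mem_insert, Finset.mem_image, Finset.mem_Icc] at h
    have hpow : 0 < 2 ^ (n + 1) := Nat.pow_pos (by norm_num)
    rcases h with rfl | ⟨k, hk, rfl⟩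
    · have h1 : ¬ (2 = 2 * n + 2) := by omega
      have h2 : (∑ s ∈ Finset.Icc 2 n,
          if 2 = 2 * n - 2 * s + 4 then 2 ^ (n + 1) * (n.choose s + n.choose (s - 1)) else 0) = 0 := by
        apply Finset.sum_eq_zero
        intro s hs
        rw [Finset.mem_Icc] at hs
        rw [if_neg (by omega)]
      rw [h2, if_neg h1, if_pos rfl]
      omega
    · rcases Nat.lt_or_ge k (n + 1) with hk' | hk'
      · -- 2 ≤ k ≤ n : comes from the sum at s = n - k + 2
        have hsum : 2 ^ (n + 1) * (n.choose (n - k + 2) + n.choose (n - k + 2 - 1)) ≤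
            ∑ s ∈ Finset.Icc 2 n,
              if 2 * k = 2 * n - 2 * s + 4 then 2 ^ (n + 1) * (n.choose s + n.choose (s - 1)) else 0 := by
          have hmem : n - k + 2 ∈ Finset.Icc 2 n := by
            rw [Finset.mem_Icc]; omega
          have := Finset.single_le_sum
            (f := fun s => if 2 * k = 2 * n - 2 * s + 4 then
              2 ^ (n + 1) * (n.choose s + n.choose (s - 1)) else 0)
            (fun i _ => Nat.zero_le _) hmem
          rwa [if_pos (by omega)] at this
        have hch : 0 < n.choose (n - k + 2) := by
          apply Nat.choose_pos; omega
        have hterm : 0 < 2 ^ (n + 1) * (n.choose (n - k + 2) + n.choose (n - k + 2 - 1)) := by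
          positivity
        omega
      · have hk1 : k = n + 1 := by omega
        subst hk1
        rw [if_pos (by ring)]
        have : 0 < 2 ^ (n + 1) * (n + 2) := by positivity
        omega

theorem stmt_6 (n : ℕ) (hn : 1 ≤ n) :
    (qn n).support = insert 2 ((Finset.Icc 2 (n + 1)).image (fun k => 2 * k)) ∧
    (∀ m ∈ (qn n).support, ¬ Odd m) ∧
    2 ∈ (qn n).support ∧ 4 ∈ (qn n).support ∧ 3 ∉ (qn n).support := by
  have hs := qn_support n hn
  refine ⟨hs, ?_, ?_, ?_, ?_⟩
  · intro m hm
    rw [hs] at hm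
    simp only [Finset.mem_insert, Finset.mem_image, Finset.mem_Icc] at hm
    rcases hm with rfl | ⟨k, _, rfl⟩
    · decide
    · simp [Nat.odd_iff]
  · rw [hs]; exact Finset.mem_insert_self _ _
  · rw [hs]
    simp only [Finset.mem_insert, Finset.mem_image, Finset.mem_Icc]
    exact Or.inr ⟨2, by omega, by omega⟩
  · rw [hs]
    simp only [Finset.mem_insert, Finset.mem_image, Finset.mem_Icc]
    rintro (h | ⟨k, hk, hk2⟩) <;> omega
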